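/- Let (f,g) ∈ 𝒞₄(I), let h := ∫(W^{2,1}_{f,g})^{1/3} (an antiderivative of the real cube root of W^{2,1}_{f,g}), and let Z := (1/(h'∘h⁻¹))·(Y∘h⁻¹) for Y ∈ {f', g'}. If the expression (3W^{4,1}_{f,g} + 12W^{3,2}_{f,g})/(W^{2,1}_{f,g})^{5/3} − 5(W^{3,1}_{f,g})²/(W^{2,1}_{f,g})^{8/3} is constant on I, then there exists p ∈ ℝ such that Z'' = pZ on h(I). -/

import Mathlib

open Filter Topology Set Function


/-- The real cube root of a real number. -/
noncomputable def cbrt (x : ℝ) : ℝ :=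
  if 0 ≤ x then x ^ ((1 : ℝ) / 3) else -((-x) ^ ((1 : ℝ) / 3))

lemma cbrt_cube (x : ℝ) : (cbrt x) ^ 3 = x := by
  unfold cbrt
  split_ifs with hx
  · rw [← Real.rpow_natCast (x ^ ((1:ℝ)/3)) 3, ← Real.rpow_mul hx]
    norm_num
  · push_neg at hx
    rw [Odd.neg_pow (by decide), ← Real.rpow_natCast ((-x) ^ ((1:ℝ)/3)) 3,
      ← Real.rpow_mul (by linarith)]
    norm_num

lemma cbrt_ne_zero {x : ℝ} (hx : x ≠ 0) : cbrt x ≠ 0 := by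
  intro hc
  apply hx
  rw [← cbrt_cube x, hc]
  ring

lemma hasDerivAt_rpow_third {a : ℝ} (ha : 0 < a) :
    HasDerivAt (fun y : ℝ => y ^ ((1:ℝ)/3)) (1 / (3 * (a ^ ((1:ℝ)/3)) ^ 2)) a := by
  have h := Real.hasDerivAt_rpow_const (p := (1:ℝ)/3) (Or.inl ha.ne')
  convert h using 1
  rw [← Real.rpow_natCast (a ^ ((1:ℝ)/3)) 2, ← Real.rpow_mul ha.le]
  rw [show ((1:ℝ)/3 - 1) = -(2/3) by norm_num, Real.rpow_neg ha.le]
  have : a ^ ((2:ℝ)/3) ≠ 0 := by positivity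
  field_simp
  norm_num

lemma hasDerivAt_cbrt {x : ℝ} (hx : x ≠ 0) :
    HasDerivAt cbrt (1 / (3 * (cbrt x) ^ 2)) x := by
  rcases lt_or_gt_of_ne hx with hneg | hpos
  · have hev : (fun y : ℝ => -((-y) ^ ((1:ℝ)/3))) =ᶠ[nhds x] cbrt := by
      filter_upwards [eventually_lt_nhds hneg] with y hy
      simp [cbrt, not_le.2 hy]
    have h1 : HasDerivAt (fun y : ℝ => -((-y) ^ ((1:ℝ)/3)))
        (1 / (3 * (cbrt x) ^ 2)) x := by
      have hinner : HasDerivAt (fun y : ℝ => -y) (-1) x := (hasDerivAt_id x).neg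
      have houter := hasDerivAt_rpow_third (a := -x) (by linarith)
      have := (houter.comp x hinner).neg
      refine this.congr_deriv ?_
      have : cbrt x = -((-x) ^ ((1:ℝ)/3)) := by simp [cbrt, not_le.2 hneg]
      rw [this]
      ring
    exact h1.congr_of_eventuallyEq hev.symm
  · have hev : (fun y : ℝ => y ^ ((1:ℝ)/3)) =ᶠ[nhds x] cbrt := by
      filter_upwards [eventually_gt_nhds hpos] with y hy
      simp [cbrt, hy.le]
    have h1 := hasDerivAt_rpow_third hpos
    have : cbrt x = x ^ ((1:ℝ)/3) := by simp [cbrt, hpos.le]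
    rw [this]
    exact h1.congr_of_eventuallyEq hev.symm

/-- The generalized Wronski-type determinant `W^{i,j}_{f,g}`. -/
noncomputable def Wdet (f g : ℝ → ℝ) (i j : ℕ) (x : ℝ) : ℝ :=
  iteratedDeriv i f x * iteratedDeriv j g x - iteratedDeriv j f x * iteratedDeriv i g x

lemma key_algebra (a w w1 w2 w41 w32 Y Y1 Y2 K : ℝ) (ha : a ≠ 0)
    (hcube : a ^ 3 = w)
    (hODE : Y2 * w = w1 * Y1 - w32 * Y)
    (hc : (3 * w41 + 12 * w32) * a ^ 3 - 5 * w1 ^ 2 = K * a ^ 8)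
    (hw2 : w2 = w41 + w32) :
    Y2 * a ^ 2 - Y * (w2 / (3 * a ^ 2) - 2 * w1 ^ 2 / (9 * a ^ 5)) * a -
      3 * a * (w1 / (3 * a ^ 2)) * Y1 + 3 * (w1 / (3 * a ^ 2)) ^ 2 * Y =
      (-K / 9) * a ^ 4 * Y := by
  subst hw2
  have h9 : (9 : ℝ) * a ^ 5 ≠ 0 := by positivity
  field_simp
  linear_combination 27 * a ^ 3 * hODE + 27 * a ^ 3 * Y2 * hcube - 3 * Y * hc


lemma aux_Z (I : Set ℝ) (hI : IsOpen I) (hIc : I.OrdConnected)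
    (h u u1 u2 Y Y1 Y2 : ℝ → ℝ) (p : ℝ)
    (hu0 : ∀ x ∈ I, u x ≠ 0)
    (hh : ∀ x ∈ I, HasDerivAt h (u x) x)
    (hu : ∀ x ∈ I, HasDerivAt u (u1 x) x)
    (hu1d : ∀ x ∈ I, HasDerivAt u1 (u2 x) x)
    (hYd : ∀ x ∈ I, HasDerivAt Y (Y1 x) x)
    (hY1d : ∀ x ∈ I, HasDerivAt Y1 (Y2 x) x)
    (hkey : ∀ x ∈ I, Y2 x * u x ^ 2 - Y x * u2 x * u x - 3 * u x * u1 x * Y1 x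
        + 3 * u1 x ^ 2 * Y x = p * u x ^ 4 * Y x) :
    ∀ t ∈ h '' I,
      deriv (deriv (fun s =>
        (1 / deriv h (Function.invFunOn h I s)) * Y (Function.invFunOn h I s))) t =
      p * ((1 / deriv h (Function.invFunOn h I t)) * Y (Function.invFunOn h I t)) := by
  have hinj : Set.InjOn h I := by
    have hstrict : ∀ a ∈ I, ∀ b ∈ I, a < b → h a ≠ h b := by
      intro a ha b hb hab heq
      have hsub : Set.Icc a b ⊆ I := hIc.out ha hb
      obtain ⟨c, hc, hc'⟩ := exists_hasDerivAt_eq_slope h u hab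
        (fun x hx => ((hh x (hsub hx)).continuousAt.continuousWithinAt))
        (fun x hx => hh x (hsub ⟨hx.1.le, hx.2.le⟩))
      rw [heq, sub_self, zero_div] at hc'
      exact hu0 c (hsub ⟨hc.1.le, hc.2.le⟩) hc'
    intro a ha b hb heq
    rcases lt_trichotomy a b with hlt | he | hgt
    · exact absurd heq (hstrict a ha b hb hlt)
    · exact he
    · exact absurd heq.symm (hstrict b hb a ha hgt)
  set φ := Function.invFunOn h I with hφ
  have hφh : ∀ x ∈ I, φ (h x) = x := fun x hx => hinj.leftInvOn_invFunOn hx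
  -- local data at each point of I
  have claimA : ∀ x₀ ∈ I, HasDerivAt (fun s => (1 / deriv h (φ s)) * Y (φ s))
      ((Y1 x₀ * u x₀ - Y x₀ * u1 x₀) / u x₀ ^ 3) (h x₀) := by
    intro x₀ hx₀
    have hne0 : u x₀ ≠ 0 := hu0 x₀ hx₀
    have hsd : HasStrictDerivAt h (u x₀) x₀ :=
      hasStrictDerivAt_of_hasDerivAt_of_continuousAt
        (by filter_upwards [hI.mem_nhds hx₀] with y hy using hh y hy)
        ((hu x₀ hx₀).differentiableAt.continuousAt)
    have hFe := hsd.hasStrictFDerivAt_equiv hne0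
    set ψ := hsd.localInverse h (u x₀) x₀ hne0 with hψ
    have hψx₀ : ψ (h x₀) = x₀ := hFe.localInverse_apply_image
    have hrig : ∀ᶠ t in 𝓝 (h x₀), h (ψ t) = t := hFe.eventually_right_inverse
    have hcont : ContinuousAt ψ (h x₀) := hFe.localInverse_continuousAt
    have hψI : ∀ᶠ t in 𝓝 (h x₀), ψ t ∈ I := by
      have : I ∈ 𝓝 (ψ (h x₀)) := by rw [hψx₀]; exact hI.mem_nhds hx₀
      exact hcont.eventually_mem this
    have hφψ : ∀ᶠ t in 𝓝 (h x₀), φ t = ψ t := by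
      filter_upwards [hψI, hrig] with t h1 h2
      conv_lhs => rw [← h2]
      exact hφh _ h1
    have hZev : (fun s => (1 / deriv h (φ s)) * Y (φ s)) =ᶠ[𝓝 (h x₀)]
        (fun t => (1 / u (ψ t)) * Y (ψ t)) := by
      filter_upwards [hφψ, hψI] with t h1 h2
      rw [h1, (hh _ h2).deriv]
    have hψd : HasDerivAt ψ (u x₀)⁻¹ (h x₀) := (hsd.to_localInverse hne0).hasDerivAt
    have hF : HasDerivAt (fun x => (1 / u x) * Y x)
        (((0 * u x₀ - 1 * u1 x₀) / u x₀ ^ 2) * Y x₀ + (1 / u x₀) * Y1 x₀) x₀ :=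
      ((hasDerivAt_const x₀ (1:ℝ)).div (hu x₀ hx₀) hne0).mul (hYd x₀ hx₀)
    have hF' : HasDerivAt (fun x => (1 / u x) * Y x)
        (((0 * u x₀ - 1 * u1 x₀) / u x₀ ^ 2) * Y x₀ + (1 / u x₀) * Y1 x₀) (ψ (h x₀)) := by
      rw [hψx₀]; exact hF
    have hcomp := HasDerivAt.comp (h x₀) hF' hψd
    have : HasDerivAt (fun t => (1 / u (ψ t)) * Y (ψ t))
        ((Y1 x₀ * u x₀ - Y x₀ * u1 x₀) / u x₀ ^ 3) (h x₀) := by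
      refine hcomp.congr_deriv ?_
      field_simp
      ring
    exact this.congr_of_eventuallyEq hZev
  -- conclusion
  rintro t ⟨x₀, hx₀, rfl⟩
  have hne0 : u x₀ ≠ 0 := hu0 x₀ hx₀
  have hsd : HasStrictDerivAt h (u x₀) x₀ :=
    hasStrictDerivAt_of_hasDerivAt_of_continuousAt
      (by filter_upwards [hI.mem_nhds hx₀] with y hy using hh y hy)
      ((hu x₀ hx₀).differentiableAt.continuousAt)
  have hFe := hsd.hasStrictFDerivAt_equiv hne0
  set ψ := hsd.localInverse h (u x₀) x₀ hne0 with hψ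
  have hψx₀ : ψ (h x₀) = x₀ := hFe.localInverse_apply_image
  have hrig : ∀ᶠ t in 𝓝 (h x₀), h (ψ t) = t := hFe.eventually_right_inverse
  have hcont : ContinuousAt ψ (h x₀) := hFe.localInverse_continuousAt
  have hψI : ∀ᶠ t in 𝓝 (h x₀), ψ t ∈ I := by
    have : I ∈ 𝓝 (ψ (h x₀)) := by rw [hψx₀]; exact hI.mem_nhds hx₀
    exact hcont.eventually_mem this
  have hdZ : deriv (fun s => (1 / deriv h (φ s)) * Y (φ s)) =ᶠ[𝓝 (h x₀)]
      (fun t => (Y1 (ψ t) * u (ψ t) - Y (ψ t) * u1 (ψ t)) / u (ψ t) ^ 3) := by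
    filter_upwards [hψI, hrig] with t h1 h2
    have hA := claimA (ψ t) h1
    rw [h2] at hA
    rw [hA.deriv]
  have hψd : HasDerivAt ψ (u x₀)⁻¹ (h x₀) := (hsd.to_localInverse hne0).hasDerivAt
  have hGnum : HasDerivAt (fun x => Y1 x * u x - Y x * u1 x)
      ((Y2 x₀ * u x₀ + Y1 x₀ * u1 x₀) - (Y1 x₀ * u1 x₀ + Y x₀ * u2 x₀)) x₀ :=
    ((hY1d x₀ hx₀).mul (hu x₀ hx₀)).sub ((hYd x₀ hx₀).mul (hu1d x₀ hx₀))
  have hGden : HasDerivAt (fun x => u x ^ 3) ((3:ℕ) * u x₀ ^ (3-1) * u1 x₀) x₀ :=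
    (hu x₀ hx₀).pow 3
  have hG : HasDerivAt (fun x => (Y1 x * u x - Y x * u1 x) / u x ^ 3)
      ((((Y2 x₀ * u x₀ + Y1 x₀ * u1 x₀) - (Y1 x₀ * u1 x₀ + Y x₀ * u2 x₀)) * u x₀ ^ 3 -
        (Y1 x₀ * u x₀ - Y x₀ * u1 x₀) * ((3:ℕ) * u x₀ ^ (3-1) * u1 x₀)) / (u x₀ ^ 3) ^ 2)
      (ψ (h x₀)) := by
    rw [hψx₀]
    exact hGnum.div hGden (pow_ne_zero 3 hne0)
  have hcomp := HasDerivAt.comp (h x₀) hG hψd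
  have hdd : HasDerivAt (deriv (fun s => (1 / deriv h (φ s)) * Y (φ s)))
      (((((Y2 x₀ * u x₀ + Y1 x₀ * u1 x₀) - (Y1 x₀ * u1 x₀ + Y x₀ * u2 x₀)) * u x₀ ^ 3 -
        (Y1 x₀ * u x₀ - Y x₀ * u1 x₀) * ((3:ℕ) * u x₀ ^ (3-1) * u1 x₀)) / (u x₀ ^ 3) ^ 2) *
        (u x₀)⁻¹) (h x₀) :=
    hcomp.congr_of_eventuallyEq hdZ
  rw [hdd.deriv, hφh x₀ hx₀, (hh x₀ hx₀).deriv]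
  have hk := hkey x₀ hx₀
  field_simp
  linear_combination (u x₀) ^ 2 * hk


lemma instantiateAux (I : Set ℝ) (hI : IsOpen I) (hIc : I.OrdConnected)
    (h : ℝ → ℝ) (K : ℝ)
    (d1f d2f d3f d4f d1g d2g d3g d4g : ℝ → ℝ)
    (hdf1 : ∀ x ∈ I, HasDerivAt d1f (d2f x) x)
    (hdf2 : ∀ x ∈ I, HasDerivAt d2f (d3f x) x)
    (hdf3 : ∀ x ∈ I, HasDerivAt d3f (d4f x) x)
    (hdg1 : ∀ x ∈ I, HasDerivAt d1g (d2g x) x)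
    (hdg2 : ∀ x ∈ I, HasDerivAt d2g (d3g x) x)
    (hdg3 : ∀ x ∈ I, HasDerivAt d3g (d4g x) x)
    (hw0 : ∀ x ∈ I, d2f x * d1g x - d1f x * d2g x ≠ 0)
    (hh : ∀ x ∈ I, HasDerivAt h (cbrt (d2f x * d1g x - d1f x * d2g x)) x)
    (hconst : ∀ x ∈ I,
      (3 * (d4f x * d1g x - d1f x * d4g x) + 12 * (d3f x * d2g x - d2f x * d3g x)) /
          (cbrt (d2f x * d1g x - d1f x * d2g x)) ^ 5 -
        5 * (d3f x * d1g x - d1f x * d3g x) ^ 2 /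
          (cbrt (d2f x * d1g x - d1f x * d2g x)) ^ 8 = K)
    (Y Y1 Y2 : ℝ → ℝ)
    (hYd : ∀ x ∈ I, HasDerivAt Y (Y1 x) x)
    (hY1d : ∀ x ∈ I, HasDerivAt Y1 (Y2 x) x)
    (hODE : ∀ x ∈ I, Y2 x * (d2f x * d1g x - d1f x * d2g x) =
      (d3f x * d1g x - d1f x * d3g x) * Y1 x - (d3f x * d2g x - d2f x * d3g x) * Y x) :
    ∀ t ∈ h '' I,
      deriv (deriv (fun s =>
        (1 / deriv h (Function.invFunOn h I s)) * Y (Function.invFunOn h I s))) t =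
      (-K / 9) * ((1 / deriv h (Function.invFunOn h I t)) * Y (Function.invFunOn h I t)) := by
  set w : ℝ → ℝ := fun x => d2f x * d1g x - d1f x * d2g x with hw_def
  set w1 : ℝ → ℝ := fun x => d3f x * d1g x - d1f x * d3g x with hw1_def
  set w2 : ℝ → ℝ := fun x => (d4f x * d1g x + d3f x * d2g x) - (d2f x * d3g x + d1f x * d4g x)
    with hw2_def
  set u : ℝ → ℝ := fun x => cbrt (w x) with hu_def
  set u1 : ℝ → ℝ := fun x => w1 x / (3 * u x ^ 2) with hu1_def
  set u2 : ℝ → ℝ := fun x => w2 x / (3 * u x ^ 2) - 2 * w1 x ^ 2 / (9 * u x ^ 5) with hu2_def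
  have hu0 : ∀ x ∈ I, u x ≠ 0 := fun x hx => cbrt_ne_zero (hw0 x hx)
  have hwd : ∀ x ∈ I, HasDerivAt w (w1 x) x := by
    intro x hx
    have := ((hdf2 x hx).mul (hdg1 x hx)).sub ((hdf1 x hx).mul (hdg2 x hx))
    refine this.congr_deriv ?_
    simp only [hw1_def]; ring
  have hud : ∀ x ∈ I, HasDerivAt u (u1 x) x := by
    intro x hx
    have := (hasDerivAt_cbrt (hw0 x hx)).comp x (hwd x hx)
    refine this.congr_deriv ?_
    simp only [hu1_def, hu_def]; ring
  have hw1d : ∀ x ∈ I, HasDerivAt w1 (w2 x) x := by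
    intro x hx
    exact ((hdf3 x hx).mul (hdg1 x hx)).sub ((hdf1 x hx).mul (hdg3 x hx))
  have hu1d : ∀ x ∈ I, HasDerivAt u1 (u2 x) x := by
    intro x hx
    have hne : (3 : ℝ) * u x ^ 2 ≠ 0 := mul_ne_zero three_ne_zero (pow_ne_zero 2 (hu0 x hx))
    have hden : HasDerivAt (fun y => 3 * u y ^ 2) (3 * ((2 : ℕ) * u x ^ (2 - 1) * u1 x)) x :=
      ((hud x hx).pow 2).const_mul 3
    have := (hw1d x hx).div hden hne
    refine this.congr_deriv ?_
    have h0 : u x ≠ 0 := hu0 x hx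
    simp only [hu2_def, hu1_def]
    field_simp
    ring
  have hkey : ∀ x ∈ I, Y2 x * u x ^ 2 - Y x * u2 x * u x - 3 * u x * u1 x * Y1 x
      + 3 * u1 x ^ 2 * Y x = (-K / 9) * u x ^ 4 * Y x := by
    intro x hx
    have ha : u x ≠ 0 := hu0 x hx
    have hcube : u x ^ 3 = w x := cbrt_cube (w x)
    have hc0 := hconst x hx
    have hc : (3 * (d4f x * d1g x - d1f x * d4g x) + 12 * (d3f x * d2g x - d2f x * d3g x)) *
        u x ^ 3 - 5 * w1 x ^ 2 = K * u x ^ 8 := by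
      field_simp at hc0
      have hcb : cbrt (d1g x * d2f x - d1f x * d2g x) = u x := by rw [mul_comm (d1g x)]
      rw [hcb, div_eq_iff (pow_ne_zero 8 ha)] at hc0
      simp only [hw1_def]
      apply mul_left_cancel₀ (pow_ne_zero 5 ha)
      linear_combination (u x) ^ 5 * hc0
    simp only [hu2_def, hu1_def]
    exact key_algebra (u x) (w x) (w1 x) (w2 x)
      (d4f x * d1g x - d1f x * d4g x) (d3f x * d2g x - d2f x * d3g x)
      (Y x) (Y1 x) (Y2 x) K ha hcube (hODE x hx) hc (by simp only [hw2_def]; ring)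
  exact aux_Z I hI hIc h u u1 u2 Y Y1 Y2 (-K / 9) hu0 hh hud hu1d hYd hY1d hkey

/-- If the characteristic expression of a 𝒞₄ pair is constant, then the transformed
functions `Z = (1/(h'∘h⁻¹))·(Y∘h⁻¹)`, for `Y ∈ {f', g'}`, satisfy `Z'' = pZ` on `h(I)`,
where `h` is an antiderivative of the real cube root of `W^{2,1}_{f,g}`. -/
theorem transformed_solves_Zpp_eq_pZ
    (I : Set ℝ) (hI : IsOpen I) (hIc : I.OrdConnected) (hne : I.Nonempty)
    (f g : ℝ → ℝ)
    (hf : ContDiffOn ℝ 4 f I) (hg : ContDiffOn ℝ 4 g I)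
    (hg' : ∀ x ∈ I, deriv g x ≠ 0)
    (hphi' : ∀ x ∈ I, deriv (fun t => deriv f t / deriv g t) x ≠ 0)
    (h : ℝ → ℝ) (hh : ∀ x ∈ I, HasDerivAt h (cbrt (Wdet f g 2 1 x)) x)
    (K : ℝ)
    (hconst : ∀ x ∈ I,
      (3 * Wdet f g 4 1 x + 12 * Wdet f g 3 2 x) / (cbrt (Wdet f g 2 1 x)) ^ 5 -
        5 * (Wdet f g 3 1 x) ^ 2 / (cbrt (Wdet f g 2 1 x)) ^ 8 = K) :
    ∃ p : ℝ, ∀ Y ∈ ({deriv f, deriv g} : Set (ℝ → ℝ)), ∀ t ∈ h '' I,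
      deriv
        (deriv (fun s =>
          (1 / deriv h (Function.invFunOn h I s)) * Y (Function.invFunOn h I s))) t =
      p * ((1 / deriv h (Function.invFunOn h I t)) * Y (Function.invFunOn h I t)) := by
  have it1 : ∀ F : ℝ → ℝ, iteratedDeriv 1 F = deriv F := fun F => iteratedDeriv_one
  have it2 : ∀ F : ℝ → ℝ, iteratedDeriv 2 F = deriv (deriv F) := by
    intro F; rw [show (2:ℕ) = 1+1 from rfl, iteratedDeriv_succ, iteratedDeriv_one]
  have it3 : ∀ F : ℝ → ℝ, iteratedDeriv 3 F = deriv (deriv (deriv F)) := by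
    intro F; rw [show (3:ℕ) = 2+1 from rfl, iteratedDeriv_succ, it2]
  have it4 : ∀ F : ℝ → ℝ, iteratedDeriv 4 F = deriv (deriv (deriv (deriv F))) := by
    intro F; rw [show (4:ℕ) = 3+1 from rfl, iteratedDeriv_succ, it3]
  have hW21 : ∀ x, Wdet f g 2 1 x =
      deriv (deriv f) x * deriv g x - deriv f x * deriv (deriv g) x := by
    intro x; simp [Wdet, it1, it2]
  have hW31 : ∀ x, Wdet f g 3 1 x =
      deriv (deriv (deriv f)) x * deriv g x - deriv f x * deriv (deriv (deriv g)) x := by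
    intro x; simp [Wdet, it1, it3]
  have hW41 : ∀ x, Wdet f g 4 1 x =
      deriv (deriv (deriv (deriv f))) x * deriv g x -
        deriv f x * deriv (deriv (deriv (deriv g))) x := by
    intro x; simp [Wdet, it1, it4]
  have hW32 : ∀ x, Wdet f g 3 2 x =
      deriv (deriv (deriv f)) x * deriv (deriv g) x -
        deriv (deriv f) x * deriv (deriv (deriv g)) x := by
    intro x; simp [Wdet, it2, it3]
  have chain : ∀ F : ℝ → ℝ, ContDiffOn ℝ 4 F I →
      (∀ x ∈ I, HasDerivAt (deriv F) (deriv (deriv F) x) x) ∧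
      (∀ x ∈ I, HasDerivAt (deriv (deriv F)) (deriv (deriv (deriv F)) x) x) ∧
      (∀ x ∈ I, HasDerivAt (deriv (deriv (deriv F))) (deriv (deriv (deriv (deriv F))) x) x) := by
    intro F hF
    have h1 : ContDiffOn ℝ 3 (deriv F) I := hF.deriv_of_isOpen hI (by norm_num)
    have h2 : ContDiffOn ℝ 2 (deriv (deriv F)) I := h1.deriv_of_isOpen hI (by norm_num)
    have h3 : ContDiffOn ℝ 1 (deriv (deriv (deriv F))) I := h2.deriv_of_isOpen hI (by norm_num)
    refine ⟨?_, ?_, ?_⟩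
    · exact fun x hx =>
        ((h1.differentiableOn (by norm_num)).differentiableAt (hI.mem_nhds hx)).hasDerivAt
    · exact fun x hx =>
        ((h2.differentiableOn (by norm_num)).differentiableAt (hI.mem_nhds hx)).hasDerivAt
    · exact fun x hx =>
        ((h3.differentiableOn (by norm_num)).differentiableAt (hI.mem_nhds hx)).hasDerivAt
  obtain ⟨hdf1, hdf2, hdf3⟩ := chain f hf
  obtain ⟨hdg1, hdg2, hdg3⟩ := chain g hg
  have hw0 : ∀ x ∈ I,
      deriv (deriv f) x * deriv g x - deriv f x * deriv (deriv g) x ≠ 0 := by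
    intro x hx hzero
    apply hphi' x hx
    have hq : HasDerivAt (fun t => deriv f t / deriv g t)
        ((deriv (deriv f) x * deriv g x - deriv f x * deriv (deriv g) x) / deriv g x ^ 2) x :=
      (hdf1 x hx).div (hdg1 x hx) (hg' x hx)
    rw [hq.deriv, hzero, zero_div]
  have hh' : ∀ x ∈ I, HasDerivAt h
      (cbrt (deriv (deriv f) x * deriv g x - deriv f x * deriv (deriv g) x)) x := by
    intro x hx
    have := hh x hx
    rwa [hW21 x] at this
  have hconst' : ∀ x ∈ I,
      (3 * (deriv (deriv (deriv (deriv f))) x * deriv g x -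
          deriv f x * deriv (deriv (deriv (deriv g))) x) +
        12 * (deriv (deriv (deriv f)) x * deriv (deriv g) x -
          deriv (deriv f) x * deriv (deriv (deriv g)) x)) /
          (cbrt (deriv (deriv f) x * deriv g x - deriv f x * deriv (deriv g) x)) ^ 5 -
        5 * (deriv (deriv (deriv f)) x * deriv g x -
          deriv f x * deriv (deriv (deriv g)) x) ^ 2 /
          (cbrt (deriv (deriv f) x * deriv g x - deriv f x * deriv (deriv g) x)) ^ 8 = K := by
    intro x hx
    have := hconst x hx
    rwa [hW21 x, hW31 x, hW41 x, hW32 x] at this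
  refine ⟨-K / 9, ?_⟩
  intro Y hY
  have hYcases : Y = deriv f ∨ Y = deriv g := by simpa using hY
  rcases hYcases with rfl | rfl
  · exact instantiateAux I hI hIc h K
      (deriv f) (deriv (deriv f)) (deriv (deriv (deriv f))) (deriv (deriv (deriv (deriv f))))
      (deriv g) (deriv (deriv g)) (deriv (deriv (deriv g))) (deriv (deriv (deriv (deriv g))))
      hdf1 hdf2 hdf3 hdg1 hdg2 hdg3 hw0 hh' hconst'
      (deriv f) (deriv (deriv f)) (deriv (deriv (deriv f))) hdf1 hdf2
      (fun x hx => by ring)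
  · exact instantiateAux I hI hIc h K
      (deriv f) (deriv (deriv f)) (deriv (deriv (deriv f))) (deriv (deriv (deriv (deriv f))))
      (deriv g) (deriv (deriv g)) (deriv (deriv (deriv g))) (deriv (deriv (deriv (deriv g))))
      hdf1 hdf2 hdf3 hdg1 hdg2 hdg3 hw0 hh' hconst'
      (deriv g) (deriv (deriv g)) (deriv (deriv (deriv g))) hdg1 hdg2
      (fun x hx => by ring)
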